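/- Let V be a nonempty finite vocabulary, (K, μ) a probability space of keys, and F an unbiased reweighting map. Let k_1, …, k_n be random keys on a common probability space such that for each i, k_i has marginal law μ and k_i is independent of the vector (k_1, …, k_{i-1}) (no further assumptions on the joint law, in particular the keys need not be i.i.d.). Then the n-fold ensemble remains unbiased: for every probability distribution P on V and every v ∈ V, E[ ENS_n(P, k_{1:n})(v) ] = P(v). -/
import Mathlib


open MeasureTheory ProbabilityTheory

/-- A probability distribution on a finite type `V`: nonnegative and sums to one. -/
def IsProbDist {V : Type*} [Fintype V] (P : V → ℝ) : Prop :=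
  (∀ v, 0 ≤ P v) ∧ ∑ v, P v = 1

/-- The `n`-fold ensemble of a reweighting map `F`:
`ENS F 1 P k = F P k₁` and `ENS F n P k = F (ENS F (n-1) P k_{1:n-1}) kₙ`. -/
def ENS {V K : Type*} (F : (V → ℝ) → K → (V → ℝ)) :
    (n : ℕ) → (V → ℝ) → (Fin n → K) → (V → ℝ)
  | 0, P, _ => P
  | n + 1, P, k => F (ENS F n P (fun i : Fin n => k i.castSucc)) (k (Fin.last n))

lemma ENS_measurable {V K : Type*} [Fintype V] [MeasurableSpace K]
    (F : (V → ℝ) → K → (V → ℝ))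
    (hFmeas : ∀ v : V, Measurable (fun pk : (V → ℝ) × K => F pk.1 pk.2 v))
    (n : ℕ) (P : V → ℝ) :
    Measurable (fun κ : Fin n → K => ENS F n P κ) := by
  induction n with
  | zero => exact measurable_const
  | succ n ih =>
    apply measurable_pi_lambda
    intro v
    have h1 : Measurable (fun κ : Fin (n+1) → K =>
        ((ENS F n P (fun i : Fin n => κ i.castSucc), κ (Fin.last n)) : (V → ℝ) × K)) :=
      (ih.comp (measurable_pi_lambda _ fun i => measurable_pi_apply _)).prodMk
        (measurable_pi_apply _)
    exact (hFmeas v).comp h1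

lemma ENS_isProbDist {V K : Type*} [Fintype V]
    (F : (V → ℝ) → K → (V → ℝ))
    (hFdist : ∀ P : V → ℝ, IsProbDist P → ∀ k : K, IsProbDist (F P k))
    (n : ℕ) (P : V → ℝ) (hP : IsProbDist P) (κ : Fin n → K) :
    IsProbDist (ENS F n P κ) := by
  induction n with
  | zero => exact hP
  | succ n ih => exact hFdist _ (ih _) _

lemma probDist_le_one {V : Type*} [Fintype V] {P : V → ℝ} (hP : IsProbDist P) (v : V) :
    P v ≤ 1 := by
  rw [← hP.2]
  exact Finset.single_le_sum (fun w _ => hP.1 w) (Finset.mem_univ v)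

lemma measurableSet_isProbDist {V : Type*} [Fintype V] :
    MeasurableSet {P : V → ℝ | IsProbDist P} := by
  have : {P : V → ℝ | IsProbDist P}
      = (⋂ v, {P : V → ℝ | 0 ≤ P v}) ∩ {P : V → ℝ | ∑ v, P v = 1} := by
    ext P; simp [IsProbDist, Set.mem_iInter]
  rw [this]
  refine MeasurableSet.inter (MeasurableSet.iInter fun v => ?_) ?_
  · exact measurableSet_le measurable_const (measurable_pi_apply v)
  · exact (Finset.measurable_sum _ fun v _ => measurable_pi_apply v) (measurableSet_singleton 1)

/-- **Unbiasedness of the ensemble under sequentially independent keys.**  If `F` is an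
unbiased reweighting map and `k 0, …, k (n-1)` are random keys such that each `k i` has
marginal law `μ` and is independent of the vector of previous keys `(k 0, …, k (i-1))`
(the keys need not be i.i.d.), then the `n`-fold ensemble remains unbiased: for every
probability distribution `P` on `V` and every token `v`,
`E[ENS F n P (k · ω) v] = P v`. -/
theorem ensemble_unbiased_of_sequentially_independent_keys
    {V K Ω : Type*} [Fintype V] [Nonempty V] [MeasurableSpace K] [MeasurableSpace Ω]
    (μ : Measure K) [IsProbabilityMeasure μ]
    (Pr : Measure Ω) [IsProbabilityMeasure Pr]
    (F : (V → ℝ) → K → (V → ℝ))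
    (hFmeas : ∀ v : V, Measurable (fun pk : (V → ℝ) × K => F pk.1 pk.2 v))
    (hFdist : ∀ P : V → ℝ, IsProbDist P → ∀ k : K, IsProbDist (F P k))
    (hFunbiased : ∀ P : V → ℝ, IsProbDist P → ∀ v : V, ∫ k, F P k v ∂μ = P v)
    (n : ℕ) (hn : 1 ≤ n)
    (k : Fin n → Ω → K) (hkmeas : ∀ i, Measurable (k i))
    (hklaw : ∀ i, Measure.map (k i) Pr = μ)
    (hkindep : ∀ i : Fin n,
      IndepFun (fun ω => fun j : Fin i.1 => k ⟨j.1, j.2.trans i.2⟩ ω) (k i) Pr)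
    (P : V → ℝ) (hP : IsProbDist P) (v : V) :
    ∫ ω, ENS F n P (fun i => k i ω) v ∂Pr = P v := by
  clear hn
  induction n generalizing v with
  | zero => simp [ENS, measure_univ]
  | succ n ih =>
    -- previous keys vector
    set kp : Ω → (Fin n → K) := fun ω => fun i : Fin n => k i.castSucc ω with hkp
    -- X : state after n steps
    set X : Ω → (V → ℝ) := fun ω => ENS F n P (kp ω) with hX
    set Y : Ω → K := k (Fin.last n) with hY
    have hXmeas : Measurable X :=
      (ENS_measurable F hFmeas n P).comp
        (measurable_pi_lambda _ fun i => hkmeas i.castSucc)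
    have hYmeas : Measurable Y := hkmeas _
    -- induction hypothesis: E[X ω v'] = P v' for all v'
    have hIH : ∀ v' : V, ∫ ω, X ω v' ∂Pr = P v' := by
      intro v'
      exact ih (fun i => k i.castSucc) (fun i => hkmeas _) (fun i => hklaw _)
        (fun i => hkindep i.castSucc) v'
    -- independence of X and Y
    have hindepXY : IndepFun X Y Pr := by
      have h := hkindep (Fin.last n)
      have h2 : IndepFun kp Y Pr := h
      exact h2.comp (ENS_measurable F hFmeas n P) measurable_id
    -- the joint law
    set ρ : Measure (V → ℝ) := Measure.map X Pr with hρ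
    haveI : IsProbabilityMeasure ρ := Measure.isProbabilityMeasure_map hXmeas.aemeasurable
    have hmapY : Measure.map Y Pr = μ := hklaw _
    have hjoint : Measure.map (fun ω => (X ω, Y ω)) Pr = ρ.prod μ := by
      rw [← hmapY]
      exact (indepFun_iff_map_prod_eq_prod_map_map hXmeas.aemeasurable
        hYmeas.aemeasurable).mp hindepXY
    -- φ and its truncation φ'
    set φ : (V → ℝ) × K → ℝ := fun pk => F pk.1 pk.2 v with hφdef
    have hφmeas : Measurable φ := hFmeas v
    set φ' : (V → ℝ) × K → ℝ := fun pk => min 1 (max 0 (φ pk)) with hφ'def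
    have hφ'meas : Measurable φ' := measurable_const.min (measurable_const.max hφmeas)
    have hφ'bdd : ∀ pk, |φ' pk| ≤ 1 := by
      intro pk
      rw [abs_le]
      constructor
      · exact le_trans (by norm_num) (le_min zero_le_one (le_max_left _ _))
      · exact min_le_left _ _
    have hφ'int : Integrable φ' (ρ.prod μ) :=
      (integrable_const 1).mono' hφ'meas.aestronglyMeasurable
        (Filter.Eventually.of_forall fun pk => by simpa using hφ'bdd pk)
    -- agreement on prob dists
    have hagree : ∀ p : V → ℝ, IsProbDist p → ∀ κ : K, φ' (p, κ) = φ (p, κ) := by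
      intro p hp κ
      have h1 := hFdist p hp κ
      have h0 : 0 ≤ φ (p, κ) := h1.1 v
      have hle : φ (p, κ) ≤ 1 := probDist_le_one h1 v
      simp [hφ'def, max_eq_right h0, min_eq_right hle]
    -- ρ-a.e. p is a prob dist
    have hρae : ∀ᵐ p ∂ρ, IsProbDist p := by
      rw [hρ, ae_map_iff hXmeas.aemeasurable measurableSet_isProbDist]
      exact Filter.Eventually.of_forall fun ω => ENS_isProbDist F hFdist n P hP (kp ω)
    -- main computation
    have hrw : (fun ω => ENS F (n+1) P (fun i => k i ω) v)
        = fun ω => φ (X ω, Y ω) := by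
      funext ω
      rfl
    rw [hrw]
    have step1 : ∫ ω, φ (X ω, Y ω) ∂Pr = ∫ pk, φ pk ∂(ρ.prod μ) := by
      rw [← hjoint]
      rw [integral_map (hXmeas.prodMk hYmeas).aemeasurable hφmeas.aestronglyMeasurable]
    have hae : φ =ᵐ[ρ.prod μ] φ' := by
      have : ∀ᵐ pk ∂(ρ.prod μ), IsProbDist pk.1 := by
        have hρ0 : ρ {p : V → ℝ | ¬ IsProbDist p} = 0 := ae_iff.mp hρae
        have h0 : (ρ.prod μ) ({p : V → ℝ | ¬ IsProbDist p} ×ˢ (Set.univ : Set K)) = 0 := by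
          rw [Measure.prod_prod, hρ0, zero_mul]
        rw [ae_iff]
        refine measure_mono_null (fun pk hpk => ?_) h0
        exact ⟨hpk, trivial⟩
      filter_upwards [this] with pk hpk
      exact (hagree pk.1 hpk pk.2).symm
    have step2 : ∫ pk, φ pk ∂(ρ.prod μ) = ∫ pk, φ' pk ∂(ρ.prod μ) :=
      integral_congr_ae hae
    have step3 : ∫ pk, φ' pk ∂(ρ.prod μ) = ∫ p, ∫ κ, φ' (p, κ) ∂μ ∂ρ :=
      integral_prod φ' hφ'int
    have step4 : ∫ p, ∫ κ, φ' (p, κ) ∂μ ∂ρ = ∫ p, p v ∂ρ := by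
      apply integral_congr_ae
      filter_upwards [hρae] with p hp
      have : ∀ κ, φ' (p, κ) = F p κ v := fun κ => hagree p hp κ
      simp_rw [this]
      exact hFunbiased p hp v
    have step5 : ∫ p, p v ∂ρ = ∫ ω, X ω v ∂Pr := by
      rw [hρ]
      exact integral_map hXmeas.aemeasurable (measurable_pi_apply v).aestronglyMeasurable
    rw [step1, step2, step3, step4, step5, hIH v]
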